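/- If the null p-values are mutually independent, independent of the non-null p-values, and each satisfies P(p_j ≤ t) ≤ t for all t ∈ [0,1], then the Benjamini–Hochberg step-up procedure with thresholds λ_j = αj/m controls the false discovery rate E[V/(R∨1)] at level at most (m₀/m)·α. -/

import Mathlib

open MeasureTheory ProbabilityTheory

/-- Step-up index: `j* = sup {j : 1 ≤ j ≤ m, q_(j) ≤ λ_j}` (with `j* = 0` if empty),
where `q_(j)` is the `j`-th order statistic of `q`. -/
noncomputable def stepUpIndex {m : ℕ} (q : Fin m → ℝ) (lam : ℕ → ℝ) : ℕ :=
  sSup {j | ∃ h : j - 1 < m, 0 < j ∧ q (Tuple.sort q ⟨j - 1, h⟩) ≤ lam j}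

/-- Index `i` is rejected by the step-up procedure iff its sorted position is below `j*`. -/
noncomputable def stepUpRejects {m : ℕ} (q : Fin m → ℝ) (lam : ℕ → ℝ) (i : Fin m) : Prop :=
  ∃ k : Fin m, Tuple.sort q k = i ∧ (k : ℕ) < stepUpIndex q lam

/-- Index type packaging each null p-value separately (`some j`) together with the whole
vector of non-null p-values (`none`); mutual independence of this family states that the
null p-values are mutually independent and independent of all non-null p-values. -/
def nullNonnullType {m : ℕ} (S₀ : Finset (Fin m)) : Option {j // j ∈ S₀} → Type
  | none => ({j : Fin m // j ∉ S₀} → ℝ)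
  | some _ => ℝ

def nullNonnullMS {m : ℕ} (S₀ : Finset (Fin m)) :
    ∀ o, MeasurableSpace (nullNonnullType S₀ o)
  | none => by unfold nullNonnullType; infer_instance
  | some _ => by unfold nullNonnullType; infer_instance

def nullNonnullFun {Ω : Type*} {m : ℕ} (S₀ : Finset (Fin m)) (p : Fin m → Ω → ℝ) :
    ∀ o : Option {j // j ∈ S₀}, Ω → nullNonnullType S₀ o
  | none => fun ω i => p i.1 ω
  | some j => p j.1

-- order statistic lemma
noncomputable def Ncount {m : ℕ} (q : Fin m → ℝ) (t : ℝ) : ℕ :=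
  (Finset.univ.filter (fun i => q i ≤ t)).card

lemma orderstat {m : ℕ} (q : Fin m → ℝ) (t : ℝ) (k : Fin m) :
    q (Tuple.sort q k) ≤ t ↔ (k : ℕ) < Ncount q t := by
  classical
  set σ := Tuple.sort q with hσ
  set L : Finset (Fin m) := Finset.univ.filter (fun k' => q (σ k') ≤ t) with hL
  have hcard : Ncount q t = L.card := by
    unfold Ncount
    rw [hL]
    rw [← Fintype.card_subtype, ← Fintype.card_subtype]
    exact Fintype.card_congr (Equiv.subtypeEquiv σ (fun k' => Iff.rfl)).symm
  have hlower : ∀ k' k'' : Fin m, k' ≤ k'' → k'' ∈ L → k' ∈ L := by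
    intro k' k'' h hk
    simp only [hL, Finset.mem_filter, Finset.mem_univ, true_and] at hk ⊢
    exact le_trans (Tuple.monotone_sort q h) hk
  have hmem : k ∈ L ↔ (k : ℕ) < L.card := by
    constructor
    · intro hk
      have hsub : Finset.Iic k ⊆ L := fun k' hk' => hlower k' k (Finset.mem_Iic.mp hk') hk
      have := Finset.card_le_card hsub
      rw [Fin.card_Iic] at this
      omega
    · intro hk
      by_contra hkL
      have hsub : L ⊆ Finset.Iio k := by
        intro l hl
        rw [Finset.mem_Iio]
        by_contra hlt
        exact hkL (hlower k l (not_lt.mp hlt) hl)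
      have := Finset.card_le_card hsub
      rw [Fin.card_Iio] at this
      omega
  rw [hcard]
  rw [← hmem]
  simp [hL]


def setB {m : ℕ} (q : Fin m → ℝ) (lam : ℕ → ℝ) : Set ℕ :=
  {j | 0 < j ∧ j ≤ m ∧ j ≤ Ncount q (lam j)}

lemma stepUpIndex_eq {m : ℕ} (q : Fin m → ℝ) (lam : ℕ → ℝ) :
    stepUpIndex q lam = sSup (setB q lam) := by
  unfold stepUpIndex setB
  congr 1
  ext j
  simp only [Set.mem_setOf_eq]
  constructor
  · rintro ⟨h, hj, hle⟩
    have h1 : j - 1 < Ncount q (lam j) := (orderstat q (lam j) ⟨j - 1, h⟩).mp hle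
    exact ⟨hj, by omega, by omega⟩
  · rintro ⟨hj, hjm, hN⟩
    have h : j - 1 < m := by omega
    refine ⟨h, hj, (orderstat q (lam j) ⟨j - 1, h⟩).mpr ?_⟩
    simpa using (by omega : j - 1 < Ncount q (lam j))

lemma setB_bddAbove {m : ℕ} (q : Fin m → ℝ) (lam : ℕ → ℝ) : BddAbove (setB q lam) :=
  ⟨m, fun _ h => h.2.1⟩

lemma stepUpIndex_mem {m : ℕ} {q : Fin m → ℝ} {lam : ℕ → ℝ}
    (h : 0 < stepUpIndex q lam) : stepUpIndex q lam ∈ setB q lam := by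
  rcases Set.eq_empty_or_nonempty (setB q lam) with he | hne
  · rw [stepUpIndex_eq, he] at h
    simp at h
  · rw [stepUpIndex_eq]
    exact Nat.sSup_mem hne (setB_bddAbove q lam)

lemma stepUpIndex_le {m : ℕ} (q : Fin m → ℝ) (lam : ℕ → ℝ) : stepUpIndex q lam ≤ m := by
  rcases Nat.eq_zero_or_pos (stepUpIndex q lam) with h | h
  · omega
  · exact (stepUpIndex_mem h).2.1

lemma rejects_imp {m : ℕ} {q : Fin m → ℝ} {lam : ℕ → ℝ} {i : Fin m}
    (h : stepUpRejects q lam i) :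
    1 ≤ stepUpIndex q lam ∧ q i ≤ lam (stepUpIndex q lam) := by
  obtain ⟨k, hk, hlt⟩ := h
  have h1 : 1 ≤ stepUpIndex q lam := by omega
  have hmem := stepUpIndex_mem (by omega : 0 < stepUpIndex q lam)
  have hN : (k : ℕ) < Ncount q (lam (stepUpIndex q lam)) := by
    have := hmem.2.2; omega
  have := (orderstat q (lam (stepUpIndex q lam)) k).mpr hN
  rw [hk] at this
  exact ⟨h1, this⟩

lemma Ncount_update_le {m : ℕ} (q : Fin m → ℝ) (j : Fin m) {t : ℝ} (ht : 0 ≤ t) :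
    Ncount q t ≤ Ncount (Function.update q j 0) t := by
  classical
  apply Finset.card_le_card
  intro i hi
  simp only [Finset.mem_filter, Finset.mem_univ, true_and] at hi ⊢
  rcases eq_or_ne i j with rfl | hij
  · simpa using ht
  · rwa [Function.update_of_ne hij]

lemma Ncount_update_eq {m : ℕ} (q : Fin m → ℝ) (j : Fin m) {t : ℝ} (ht : 0 ≤ t)
    (hq : q j ≤ t) : Ncount (Function.update q j 0) t = Ncount q t := by
  classical
  unfold Ncount
  congr 1
  ext i
  simp only [Finset.mem_filter, Finset.mem_univ, true_and]
  rcases eq_or_ne i j with rfl | hij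
  · simp [ht, hq]
  · rw [Function.update_of_ne hij]

lemma loo {m : ℕ} {q : Fin m → ℝ} {lam : ℕ → ℝ} (hmono : Monotone lam)
    (hnn : ∀ k, 0 ≤ lam k) {j : Fin m}
    (hj : q j ≤ lam (stepUpIndex q lam)) (h1 : 1 ≤ stepUpIndex q lam) :
    stepUpIndex (Function.update q j 0) lam = stepUpIndex q lam := by
  set R := stepUpIndex q lam with hR
  set q' := Function.update q j 0 with hq'
  have hsub : setB q lam ⊆ setB q' lam := by
    rintro k ⟨hk0, hkm, hkN⟩
    exact ⟨hk0, hkm, le_trans hkN (Ncount_update_le q j (hnn k))⟩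
  have hRle : R ≤ stepUpIndex q' lam := by
    rw [hR, stepUpIndex_eq q lam, stepUpIndex_eq q' lam]
    refine csSup_le_csSup (setB_bddAbove q' lam) ⟨R, stepUpIndex_mem (by omega)⟩ hsub
  have h1' : 0 < stepUpIndex q' lam := by omega
  have hmem' := stepUpIndex_mem h1'
  have hq_le : q j ≤ lam (stepUpIndex q' lam) := le_trans hj (hmono hRle)
  have hNeq := Ncount_update_eq q j (hnn (stepUpIndex q' lam)) hq_le
  have hmemB : stepUpIndex q' lam ∈ setB q lam := by
    refine ⟨h1', hmem'.2.1, ?_⟩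
    rw [← hNeq]
    exact hmem'.2.2
  have : stepUpIndex q' lam ≤ R := by
    rw [hR, stepUpIndex_eq q lam]
    exact le_csSup (setB_bddAbove q lam) hmemB
  omega

lemma measurable_Ncount {m : ℕ} (t : ℝ) :
    Measurable (fun q : Fin m → ℝ => Ncount q t) := by
  classical
  have : (fun q : Fin m → ℝ => Ncount q t)
      = fun q => ∑ i : Fin m, (if q i ≤ t then 1 else 0) := by
    funext q
    rw [Ncount, Finset.card_filter]
  rw [this]
  exact Finset.measurable_sum _ fun i _ =>
    Measurable.ite (measurableSet_le (measurable_pi_apply i) measurable_const)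
      measurable_const measurable_const

lemma measurable_all_of_finite {β γ : Type*} [MeasurableSpace β] [MeasurableSingletonClass β]
    [Finite β] [MeasurableSpace γ] (f : β → γ) : Measurable f := by
  intro s _
  exact (Set.to_countable _).measurableSet

lemma measurable_stepUpIndex {m : ℕ} (lam : ℕ → ℝ) :
    Measurable (fun q : Fin m → ℝ => stepUpIndex q lam) := by
  classical
  let b : (Fin m → ℝ) → (Fin (m + 1) → Bool) :=
    fun q j => decide ((j : ℕ) ≤ Ncount q (lam (j : ℕ)))
  let G : (Fin (m + 1) → Bool) → ℕ :=
    fun v => sSup {j | ∃ h : j < m + 1, 0 < j ∧ v ⟨j, h⟩ = true}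
  have hb : Measurable b := by
    refine measurable_pi_lambda _ fun j => ?_
    have h1 : Measurable (fun q : Fin m → ℝ => Ncount q (lam (j : ℕ))) :=
      measurable_Ncount _
    have h2 : Measurable (fun n : ℕ => decide ((j : ℕ) ≤ n)) :=
      measurable_from_top
    exact h2.comp h1
  have hG : Measurable G := measurable_all_of_finite G
  have key : (fun q : Fin m → ℝ => stepUpIndex q lam) = G ∘ b := by
    funext q
    show stepUpIndex q lam = G (b q)
    rw [stepUpIndex_eq]
    show sSup _ = sSup _
    congr 1
    ext j
    simp only [setB, Set.mem_setOf_eq, b, decide_eq_true_eq]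
    constructor
    · rintro ⟨h0, hm, hN⟩
      exact ⟨by omega, h0, hN⟩
    · rintro ⟨h, h0, hN⟩
      exact ⟨h0, by omega, hN⟩
  rw [key]
  exact hG.comp hb


lemma measurable_update_zero {m : ℕ} (j : Fin m) :
    Measurable (fun q : Fin m → ℝ => Function.update q j 0) := by
  classical
  refine measurable_pi_lambda _ fun i => ?_
  rcases eq_or_ne i j with rfl | hij
  · simpa [Function.update_self] using measurable_const
  · simpa [Function.update_of_ne hij] using measurable_pi_apply i

lemma indep_aux {Ω : Type*} [MeasureSpace Ω] {m : ℕ}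
    (p : Fin m → Ω → ℝ) (S₀ : Finset (Fin m)) (hmeas : ∀ j, Measurable (p j))
    (hindep : @iIndepFun _ _ _ _ (nullNonnullMS S₀) (nullNonnullFun S₀ p) ℙ)
    {j : Fin m} (hj : j ∈ S₀) (lam : ℕ → ℝ) :
    IndepFun (p j) (fun ω => stepUpIndex (Function.update (fun i => p i ω) j 0) lam) ℙ := by
  classical
  letI : ∀ o : Option {j' // j' ∈ S₀}, MeasurableSpace (nullNonnullType S₀ o) :=
    nullNonnullMS S₀
  set ι := Option {j' // j' ∈ S₀} with hι
  let o₀ : ι := some ⟨j, hj⟩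
  let S : Finset ι := {o₀}
  let T : Finset ι := Finset.univ.erase o₀
  have hST : Disjoint S T := by simp [S, T]
  have hfmeas : ∀ o, Measurable (nullNonnullFun S₀ p o) := by
    rintro (_ | j')
    · exact measurable_pi_lambda _ fun i => hmeas i.1
    · exact hmeas j'.1
  have hbase := hindep.indepFun_finset S T hST hfmeas
  let φ : (∀ i : (S : Finset ι), nullNonnullType S₀ i.1) → ℝ :=
    fun x => x ⟨o₀, by simp [S]⟩
  have hφ : Measurable φ := measurable_pi_apply _
  let vec : (∀ i : (T : Finset ι), nullNonnullType S₀ i.1) → (Fin m → ℝ) := fun x i =>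
    if h : i ∈ S₀ then
      (if hij : i = j then 0 else x ⟨some ⟨i, h⟩, by
        simp only [T, Finset.mem_erase, Finset.mem_univ, and_true, o₀]
        intro hc
        exact hij (congrArg Subtype.val (Option.some.inj hc))⟩)
    else x ⟨none, by simp [T, o₀]⟩ ⟨i, h⟩
  have hvec : Measurable vec := by
    refine measurable_pi_lambda _ fun i => ?_
    by_cases h : i ∈ S₀
    · by_cases hij : i = j
      · simp only [vec, dif_pos h, dite_cond_eq_true (eq_true hij)]
        exact Eq.mpr (congrArg Measurable (funext fun c => dite_cond_eq_true (eq_true hij))) measurable_const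
      · simp only [vec, dif_pos h, dite_cond_eq_false (eq_false hij)]
        exact Eq.mpr (congrArg Measurable (funext fun c => dite_cond_eq_false (eq_false hij))) (measurable_pi_apply _)
    · simp only [vec, dif_neg h]
      exact (measurable_pi_apply (⟨i, h⟩ : {j' // j' ∉ S₀})).comp (measurable_pi_apply _)
  let ψ : (∀ i : (T : Finset ι), nullNonnullType S₀ i.1) → ℕ :=
    (fun q : Fin m → ℝ => stepUpIndex (Function.update q j 0) lam) ∘ vec
  have hψ : Measurable ψ :=
    ((measurable_stepUpIndex lam).comp (measurable_update_zero j)).comp hvec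
  have hcomp := hbase.comp hφ hψ
  have heq1 : (φ ∘ fun a (i : (S : Finset ι)) => nullNonnullFun S₀ p i.1 a) = p j := rfl
  have heq2 : (ψ ∘ fun a (i : (T : Finset ι)) => nullNonnullFun S₀ p i.1 a)
      = fun ω => stepUpIndex (Function.update (fun i => p i ω) j 0) lam := by
    funext ω
    show stepUpIndex (Function.update (vec fun i : (T : Finset ι) => nullNonnullFun S₀ p i.1 ω) j 0) lam = _
    congr 1
    funext i
    rcases eq_or_ne i j with rfl | hij
    · simp [Function.update_self]
    · rw [Function.update_of_ne hij, Function.update_of_ne hij]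
      by_cases h : i ∈ S₀
      · simp only [vec, dif_pos h, dite_cond_eq_false (eq_false hij)]
        exact (dite_cond_eq_false (eq_false hij)).trans rfl
      · simp only [vec, dif_neg h]
        rfl
  rw [heq1, heq2] at hcomp
  exact hcomp

/-- Benjamini–Hochberg FDR control: if the null p-values are mutually independent,
independent of the non-null ones, and super uniform, then the BH step-up procedure with
thresholds `λ_j = αj/m` has FDR at most `(m₀/m)·α`. -/
theorem stmt_5 {Ω : Type*} [MeasureSpace Ω] [IsProbabilityMeasure (ℙ : Measure Ω)]
    {m : ℕ} (hm : 0 < m) (p : Fin m → Ω → ℝ) (S₀ : Finset (Fin m))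
    (α : ℝ) (hα : α ∈ Set.Ioo (0 : ℝ) 1)
    (hmeas : ∀ j, Measurable (p j))
    (hrange : ∀ j ω, p j ω ∈ Set.Icc (0 : ℝ) 1)
    (hnull : ∀ j ∈ S₀, ∀ t ∈ Set.Icc (0 : ℝ) 1,
      ℙ {ω | p j ω ≤ t} ≤ ENNReal.ofReal t)
    (hindep : @iIndepFun _ _ _ _ (nullNonnullMS S₀) (nullNonnullFun S₀ p) ℙ)
    (lam : ℕ → ℝ) (hlam : ∀ j, lam j = α * j / m) :
    ∫ ω, ((Set.ncard {i : Fin m | i ∈ S₀ ∧ stepUpRejects (fun j => p j ω) lam i} : ℝ) /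
        ((max (stepUpIndex (fun j => p j ω) lam) 1 : ℕ) : ℝ)) ∂ℙ ≤
      (S₀.card : ℝ) / m * α := by
  classical
  obtain ⟨hα0, hα1⟩ := hα
  have hmR : (0:ℝ) < m := by exact_mod_cast hm
  have hmono : Monotone lam := by
    intro a b hab
    rw [hlam, hlam]
    gcongr
  have hnn : ∀ k, 0 ≤ lam k := by
    intro k
    rw [hlam]
    positivity
  have hlam1 : ∀ k ∈ Finset.Icc 1 m, lam k ∈ Set.Icc (0:ℝ) 1 := by
    intro k hk
    rw [Finset.mem_Icc] at hk
    refine ⟨hnn k, ?_⟩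
    rw [hlam]
    have hkm : (k:ℝ) ≤ m := by exact_mod_cast hk.2
    calc α * k / m ≤ α * m / m := by gcongr
      _ = α := by field_simp
      _ ≤ 1 := hα1.le
  -- notation
  set q : Ω → Fin m → ℝ := fun ω i => p i ω with hq
  have hqmeas : Measurable q := measurable_pi_lambda _ hmeas
  set R : Ω → ℕ := fun ω => stepUpIndex (q ω) lam with hRdef
  set F : Fin m → Ω → ℕ := fun j ω => stepUpIndex (Function.update (q ω) j 0) lam with hFdef
  have hFmeas : ∀ j, Measurable (F j) := fun j =>
    ((measurable_stepUpIndex lam).comp (measurable_update_zero j)).comp hqmeas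
  set g : Ω → ℝ := fun ω => ∑ j ∈ S₀, ∑ k ∈ Finset.Icc 1 m,
    (if F j ω = k ∧ p j ω ≤ lam k then ((k:ℝ))⁻¹ else 0) with hgdef
  -- pointwise bound
  have hpoint : ∀ ω, ((Set.ncard {i : Fin m | i ∈ S₀ ∧ stepUpRejects (q ω) lam i} : ℝ) /
      ((max (R ω) 1 : ℕ) : ℝ)) ≤ g ω := by
    intro ω
    have hsetfin : {i : Fin m | i ∈ S₀ ∧ stepUpRejects (q ω) lam i}
        = ↑(S₀.filter fun i => stepUpRejects (q ω) lam i) := by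
      ext i; simp
    rw [hsetfin, Set.ncard_coe_finset, Finset.card_filter]
    push_cast
    rw [Finset.sum_div]
    refine Finset.sum_le_sum fun j hj => ?_
    by_cases hrej : stepUpRejects (q ω) lam j
    · obtain ⟨h1, hqle⟩ := rejects_imp hrej
      have hFR : F j ω = R ω := loo hmono hnn hqle h1
      have hmax : max (R ω) 1 = R ω := max_eq_left h1
      have hRmem : R ω ∈ Finset.Icc 1 m := by
        rw [Finset.mem_Icc]
        exact ⟨h1, stepUpIndex_le _ _⟩
      have hterm : ((R ω : ℝ))⁻¹ ≤ ∑ k ∈ Finset.Icc 1 m,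
          (if F j ω = k ∧ p j ω ≤ lam k then ((k:ℝ))⁻¹ else 0) := by
        have hs := Finset.single_le_sum
          (f := fun k => (if F j ω = k ∧ p j ω ≤ lam k then ((k:ℝ))⁻¹ else 0))
          (fun k _ => by positivity) hRmem
        refine le_trans ?_ hs
        show ((R ω : ℝ))⁻¹ ≤ if F j ω = R ω ∧ p j ω ≤ lam (R ω) then ((R ω : ℝ))⁻¹ else 0
        rw [if_pos ⟨hFR, hqle⟩]
      simp only [if_pos hrej]
      rw [one_div]
      have hsup : ((R ω : ℝ)) ⊔ 1 = (R ω : ℝ) := max_eq_left (by exact_mod_cast h1)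
      rw [hsup]
      exact hterm
    · simp only [if_neg hrej, zero_div]
      positivity
  -- measurable sets
  set A : Fin m → ℕ → Set Ω := fun j k => (F j) ⁻¹' {k} with hAdef
  set Aset : Fin m → ℕ → Set Ω := fun j k => A j k ∩ (p j) ⁻¹' (Set.Iic (lam k)) with hAsetdef
  have hAmeas : ∀ j k, MeasurableSet (A j k) := fun j k => (hFmeas j) (MeasurableSet.singleton k)
  have hAsetmeas : ∀ j k, MeasurableSet (Aset j k) := fun j k =>
    (hAmeas j k).inter ((hmeas j) measurableSet_Iic)
  have hif : ∀ j k, (fun ω => if F j ω = k ∧ p j ω ≤ lam k then ((k:ℝ))⁻¹ else 0)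
      = (Aset j k).indicator (fun _ => ((k:ℝ))⁻¹) := by
    intro j k
    funext ω
    rw [Set.indicator_apply]
    by_cases h : F j ω = k ∧ p j ω ≤ lam k
    · rw [if_pos h, if_pos]
      exact ⟨h.1, h.2⟩
    · rw [if_neg h, if_neg]
      intro hc
      exact h ⟨hc.1, hc.2⟩
  have hint : ∀ j k, Integrable ((Aset j k).indicator (fun _ => ((k:ℝ))⁻¹)) ℙ := fun j k =>
    (integrable_const _).indicator (hAsetmeas j k)
  have hgint : Integrable g ℙ := by
    refine integrable_finset_sum _ fun j _ => integrable_finset_sum _ fun k _ => ?_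
    rw [hif j k]
    exact hint j k
  have hnonneg : ∀ ω, (0:ℝ) ≤ ((Set.ncard {i : Fin m | i ∈ S₀ ∧ stepUpRejects (q ω) lam i} : ℝ) /
      ((max (R ω) 1 : ℕ) : ℝ)) := by
    intro ω
    positivity
  -- integral computation
  have hmain : ∫ ω, g ω ∂ℙ ≤ (S₀.card : ℝ) / m * α := by
    rw [hgdef]
    rw [integral_finset_sum _ (fun j _ => integrable_finset_sum _ fun k _ => by
      rw [hif j k]; exact hint j k)]
    have hinner : ∀ j ∈ S₀, ∫ ω, (∑ k ∈ Finset.Icc 1 m,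
        (if F j ω = k ∧ p j ω ≤ lam k then ((k:ℝ))⁻¹ else 0)) ∂ℙ ≤ α / m := by
      intro j hj
      rw [integral_finset_sum _ (fun k _ => by rw [hif j k]; exact hint j k)]
      have hindepF : IndepFun (F j) (p j) ℙ :=
        (indep_aux p S₀ hmeas hindep hj lam).symm
      have hterm : ∀ k ∈ Finset.Icc 1 m,
          ∫ ω, (if F j ω = k ∧ p j ω ≤ lam k then ((k:ℝ))⁻¹ else 0) ∂ℙ
          ≤ (ℙ (A j k)).toReal * (α / m) := by
        intro k hk
        rw [hif j k, integral_indicator_const _ (hAsetmeas j k), smul_eq_mul]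
        have hABmul : ℙ (Aset j k) = ℙ (A j k) * ℙ ((p j) ⁻¹' (Set.Iic (lam k))) :=
          hindepF.measure_inter_preimage_eq_mul _ _ (MeasurableSet.singleton k) measurableSet_Iic
        have hB : ℙ ((p j) ⁻¹' (Set.Iic (lam k))) ≤ ENNReal.ofReal (lam k) := by
          have : (p j) ⁻¹' (Set.Iic (lam k)) = {ω | p j ω ≤ lam k} := rfl
          rw [this]
          exact hnull j hj (lam k) (hlam1 k hk)
        have hle : ℙ (Aset j k) ≤ ℙ (A j k) * ENNReal.ofReal (lam k) := by
          rw [hABmul]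
          exact mul_le_mul_right hB _
        have htoReal : (ℙ (Aset j k)).toReal ≤ (ℙ (A j k)).toReal * lam k := by
          have h1 : (ℙ (Aset j k)).toReal ≤ (ℙ (A j k) * ENNReal.ofReal (lam k)).toReal :=
            ENNReal.toReal_mono (ENNReal.mul_ne_top (measure_ne_top _ _) ENNReal.ofReal_ne_top) hle
          rwa [ENNReal.toReal_mul, ENNReal.toReal_ofReal (hnn k)] at h1
        rw [Finset.mem_Icc] at hk
        have hk0 : (0:ℝ) < k := by exact_mod_cast hk.1
        calc (ℙ (Aset j k)).toReal * ((k:ℝ))⁻¹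
            ≤ ((ℙ (A j k)).toReal * lam k) * ((k:ℝ))⁻¹ := by
              apply mul_le_mul_of_nonneg_right htoReal (by positivity)
          _ = (ℙ (A j k)).toReal * (α / m) := by
              rw [hlam]
              field_simp
      have hsum1 : ∑ k ∈ Finset.Icc 1 m, (ℙ (A j k)).toReal ≤ 1 := by
        have hdisj : (↑(Finset.Icc 1 m) : Set ℕ).PairwiseDisjoint (A j) := by
          intro a _ b _ hab
          simp only [Function.onFun, hAdef]
          apply Set.disjoint_left.mpr
          intro ω ha hb
          simp only [Set.mem_preimage, Set.mem_singleton_iff] at ha hb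
          exact hab (ha ▸ hb ▸ rfl)
        have := measure_biUnion_finset (μ := ℙ) hdisj (fun k _ => hAmeas j k)
        have hle1 : ∑ k ∈ Finset.Icc 1 m, ℙ (A j k) ≤ 1 := by
          rw [← this]
          exact prob_le_one
        calc ∑ k ∈ Finset.Icc 1 m, (ℙ (A j k)).toReal
            = (∑ k ∈ Finset.Icc 1 m, ℙ (A j k)).toReal :=
              (ENNReal.toReal_sum (fun k _ => measure_ne_top _ _)).symm
          _ ≤ (1 : ENNReal).toReal := ENNReal.toReal_mono ENNReal.one_ne_top hle1
          _ = 1 := by simp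
      calc ∑ k ∈ Finset.Icc 1 m, ∫ ω, (if F j ω = k ∧ p j ω ≤ lam k then ((k:ℝ))⁻¹ else 0) ∂ℙ
          ≤ ∑ k ∈ Finset.Icc 1 m, (ℙ (A j k)).toReal * (α / m) := Finset.sum_le_sum hterm
        _ = (∑ k ∈ Finset.Icc 1 m, (ℙ (A j k)).toReal) * (α / m) := by
            rw [Finset.sum_mul]
        _ ≤ 1 * (α / m) := by
            apply mul_le_mul_of_nonneg_right hsum1 (by positivity)
        _ = α / m := one_mul _
    calc ∑ j ∈ S₀, ∫ ω, (∑ k ∈ Finset.Icc 1 m,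
          (if F j ω = k ∧ p j ω ≤ lam k then ((k:ℝ))⁻¹ else 0)) ∂ℙ
        ≤ ∑ _j ∈ S₀, α / m := Finset.sum_le_sum hinner
      _ = S₀.card * (α / m) := by rw [Finset.sum_const, nsmul_eq_mul]
      _ = (S₀.card : ℝ) / m * α := by ring
  calc ∫ ω, ((Set.ncard {i : Fin m | i ∈ S₀ ∧ stepUpRejects (fun j => p j ω) lam i} : ℝ) /
        ((max (stepUpIndex (fun j => p j ω) lam) 1 : ℕ) : ℝ)) ∂ℙ
      ≤ ∫ ω, g ω ∂ℙ := by
        refine integral_mono_of_nonneg (Filter.Eventually.of_forall hnonneg) hgint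
          (Filter.Eventually.of_forall hpoint)
    _ ≤ (S₀.card : ℝ) / m * α := hmain
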